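/- arXiv:1507.00433 — 3 statements merged into one kernel-verified Lean document; each statement's English description precedes it below -/
import Mathlib

section
/- Let q(x|θ) = exp(θᵀt(x) - ψ(θ) + b(x)) be the density of an exponential family distribution on ℝ^m with sufficient statistic t: ℝ^m → ℝ^s and twice differentiable t and b. Then the Hyvärinen scoring rule S(x, Q_θ) = Δ log q(x|θ) + (1/2)‖∇ log q(x|θ)‖₂², where ∇ and Δ are the gradient and Laplacian in x, is a quadratic function of θ: specifically S(x, Q_θ) = (1/2)θᵀΓ(x)θ + g(x)ᵀθ + c(x), where Γ(x) = Σ_{j=1}^m h_j(x)h_j(x)ᵀ with h_j(x) = ∂t(x)/∂x_j, g(x) = Σ_j (∂b(x)/∂x_j)h_j(x) + Δt(x), and c(x) = (1/2)‖∇b(x)‖₂² + Δb(x). Moreover Γ(x) is positive semidefinite. -/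
open Matrix

/-- Partial derivative of `f` in the `j`-th coordinate at `x`. -/
noncomputable def pderiv' {m : ℕ} (f : (Fin m → ℝ) → ℝ) (j : Fin m) (x : Fin m → ℝ) : ℝ :=
  deriv (fun s => f (Function.update x j s)) (x j)

private lemma contDiff_comp_update {m : ℕ} {f : (Fin m → ℝ) → ℝ} (hf : ContDiff ℝ 2 f)
    (x : Fin m → ℝ) (j : Fin m) : ContDiff ℝ 2 (fun s : ℝ => f (Function.update x j s)) := by
  apply hf.comp
  apply contDiff_pi.2
  intro i
  by_cases hij : i = j
  · subst hij
    simp only [Function.update_self]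
    exact contDiff_id
  · simp only [Function.update_apply, if_neg hij]
    exact contDiff_const

private lemma differentiable_deriv_of_contDiff2 {f : ℝ → ℝ} (hf : ContDiff ℝ 2 f) :
    Differentiable ℝ (deriv f) := by
  have h2 : (2 : WithTop ℕ∞) = 1 + 1 := by norm_num
  rw [h2] at hf
  exact ((contDiff_succ_iff_deriv.mp hf).2.2).differentiable one_ne_zero

private lemma pderiv'_update {m : ℕ} (f : (Fin m → ℝ) → ℝ) (j : Fin m) (x : Fin m → ℝ) (s : ℝ) :
    pderiv' f j (Function.update x j s) = deriv (fun s' => f (Function.update x j s')) s := by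
  simp only [pderiv', Function.update_idem, Function.update_self]

private lemma pderiv'_pderiv' {m : ℕ} (f : (Fin m → ℝ) → ℝ) (j : Fin m) (x : Fin m → ℝ) :
    pderiv' (fun y => pderiv' f j y) j x
      = deriv (deriv (fun s => f (Function.update x j s))) (x j) := by
  show deriv (fun s => pderiv' f j (Function.update x j s)) (x j) = _
  congr 1
  funext s
  exact pderiv'_update f j x s

private lemma deriv_comb {n : ℕ} (θ : Fin n → ℝ) (ta : Fin n → ℝ → ℝ) (bb : ℝ → ℝ) (ψc : ℝ)
    (s0 : ℝ) (hta : ∀ a, DifferentiableAt ℝ (ta a) s0) (hbb : DifferentiableAt ℝ bb s0) :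
    deriv (fun s' => (∑ a, θ a * ta a s') - ψc + bb s') s0
      = (∑ a, θ a * deriv (ta a) s0) + deriv bb s0 := by
  have H : HasDerivAt (fun s' => (∑ a, θ a * ta a s') - ψc + bb s')
      ((∑ a, θ a * deriv (ta a) s0) + deriv bb s0) s0 :=
    ((HasDerivAt.fun_sum (fun a _ => ((hta a).hasDerivAt).const_mul (θ a))).sub_const ψc).add
      hbb.hasDerivAt
  exact H.deriv

private lemma deriv_comb' {n : ℕ} (θ : Fin n → ℝ) (ta : Fin n → ℝ → ℝ) (bb : ℝ → ℝ)
    (s0 : ℝ) (hta : ∀ a, DifferentiableAt ℝ (ta a) s0) (hbb : DifferentiableAt ℝ bb s0) :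
    deriv (fun s' => (∑ a, θ a * ta a s') + bb s') s0
      = (∑ a, θ a * deriv (ta a) s0) + deriv bb s0 := by
  have H : HasDerivAt (fun s' => (∑ a, θ a * ta a s') + bb s')
      ((∑ a, θ a * deriv (ta a) s0) + deriv bb s0) s0 :=
    (HasDerivAt.fun_sum (fun a _ => ((hta a).hasDerivAt).const_mul (θ a))).add hbb.hasDerivAt
  exact H.deriv

private lemma quad_form {m n : ℕ} (h : Fin m → Fin n → ℝ) (v : Fin n → ℝ) :
    v ⬝ᵥ (∑ j, vecMulVec (h j) (h j)).mulVec v = ∑ j, (∑ a, v a * h j a) ^ 2 := by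
  simp only [Matrix.mulVec, dotProduct, Matrix.sum_apply, Matrix.vecMulVec_apply,
    Finset.sum_mul, Finset.mul_sum, pow_two]
  have swap : ∀ F : Fin n → Fin n → Fin m → ℝ,
      ∑ x, ∑ y, ∑ i, F x y i = ∑ i, ∑ x, ∑ y, F x y i := by
    intro F
    rw [show (∑ x, ∑ y, ∑ i, F x y i) = ∑ x, ∑ i, ∑ y, F x y i from
      Finset.sum_congr rfl fun x _ => Finset.sum_comm]
    exact Finset.sum_comm
  rw [swap]
  refine Finset.sum_congr rfl fun j _ => Finset.sum_congr rfl fun i _ =>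
    Finset.sum_congr rfl fun k _ => by ring

private lemma algebra_lemma {m n : ℕ} (θ : Fin n → ℝ) (p P : Fin m → Fin n → ℝ)
    (B C : Fin m → ℝ) :
    (∑ j, ((∑ a, θ a * P j a) + C j)) + (1/2 : ℝ) * ∑ j, ((∑ a, θ a * p j a) + B j)^2
    = (1/2 : ℝ) * (∑ j, (∑ a, θ a * p j a)^2)
      + (∑ a, ((∑ j, B j * p j a) + ∑ j, P j a) * θ a)
      + ((1/2 : ℝ) * (∑ j, (B j)^2) + ∑ j, C j) := by
  have h1 : (∑ a, ((∑ j, B j * p j a) + ∑ j, P j a) * θ a)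
      = ∑ j, ((∑ a, B j * p j a * θ a) + ∑ a, P j a * θ a) := by
    simp only [add_mul, Finset.sum_add_distrib, Finset.sum_mul]
    congr 1
    · exact Finset.sum_comm
    · exact Finset.sum_comm
  rw [h1]
  simp only [Finset.mul_sum, ← Finset.sum_add_distrib]
  refine Finset.sum_congr rfl fun j _ => ?_
  have e1 : ∑ a, B j * p j a * θ a = B j * ∑ a, θ a * p j a := by
    rw [Finset.mul_sum]; exact Finset.sum_congr rfl fun a _ => by ring
  have e2 : ∑ a, P j a * θ a = ∑ a, θ a * P j a :=
    Finset.sum_congr rfl fun a _ => by ring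
  have e3 : ∑ a, (B j * p j a * θ a + P j a * θ a)
      = B j * (∑ a, θ a * p j a) + ∑ a, θ a * P j a := by
    rw [Finset.sum_add_distrib, e1, e2]
  rw [e3]
  ring

/-- The Hyvärinen scoring rule of an exponential family density is quadratic in the
natural parameter, with positive semidefinite quadratic part. -/
theorem stmt_0 {m s : ℕ}
    (t : (Fin m → ℝ) → Fin s → ℝ) (b : (Fin m → ℝ) → ℝ) (ψ : (Fin s → ℝ) → ℝ)
    (ht : ∀ a, ContDiff ℝ 2 (fun y => t y a)) (hb : ContDiff ℝ 2 b)
    (logq : (Fin s → ℝ) → (Fin m → ℝ) → ℝ)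
    (hlogq : ∀ θ y, logq θ y = (∑ a, θ a * t y a) - ψ θ + b y)
    (x : Fin m → ℝ) (θ : Fin s → ℝ)
    (h : Fin m → Fin s → ℝ)
    (hh : ∀ j a, h j a = pderiv' (fun y => t y a) j x)
    (Γ : Matrix (Fin s) (Fin s) ℝ)
    (hΓ : Γ = ∑ j, Matrix.vecMulVec (h j) (h j))
    (g : Fin s → ℝ)
    (hg : ∀ a, g a = (∑ j, pderiv' b j x * h j a)
        + ∑ j, pderiv' (fun y => pderiv' (fun z => t z a) j y) j x)
    (c : ℝ)
    (hc : c = (1/2) * (∑ j, (pderiv' b j x)^2)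
        + ∑ j, pderiv' (fun y => pderiv' b j y) j x) :
    ((∑ j, pderiv' (fun y => pderiv' (logq θ) j y) j x)
        + (1/2) * ∑ j, (pderiv' (logq θ) j x)^2
      = (1/2) * (θ ⬝ᵥ Γ.mulVec θ) + g ⬝ᵥ θ + c)
    ∧ Γ.PosSemidef := by
  have ht' : ∀ (a : Fin s) (y : Fin m → ℝ) (j : Fin m),
      ContDiff ℝ 2 (fun s' : ℝ => t (Function.update y j s') a) :=
    fun a y j => contDiff_comp_update (ht a) y j
  have hb' : ∀ (y : Fin m → ℝ) (j : Fin m),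
      ContDiff ℝ 2 (fun s' : ℝ => b (Function.update y j s')) :=
    fun y j => contDiff_comp_update hb y j
  have h12 : (2 : WithTop ℕ∞) ≠ 0 := by norm_num
  have key1 : ∀ (j : Fin m) (y : Fin m → ℝ), pderiv' (logq θ) j y
      = (∑ a, θ a * pderiv' (fun z => t z a) j y) + pderiv' b j y := by
    intro j y
    have hfun : logq θ = fun z => (∑ a, θ a * t z a) - ψ θ + b z := funext (hlogq θ)
    rw [hfun]
    show deriv (fun s' => (∑ a, θ a * t (Function.update y j s') a) - ψ θ
        + b (Function.update y j s')) (y j) = _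
    rw [deriv_comb θ (fun a s' => t (Function.update y j s') a)
      (fun s' => b (Function.update y j s')) (ψ θ) (y j)
      (fun a => ((ht' a y j).differentiable h12).differentiableAt)
      ((hb' y j).differentiable h12).differentiableAt]
    rfl
  have key2 : ∀ j : Fin m, pderiv' (fun y => pderiv' (logq θ) j y) j x
      = (∑ a, θ a * pderiv' (fun y => pderiv' (fun z => t z a) j y) j x)
        + pderiv' (fun y => pderiv' b j y) j x := by
    intro j
    simp only [pderiv'_pderiv']
    have hfun : (fun s' : ℝ => logq θ (Function.update x j s'))
        = fun s' => (∑ a, θ a * t (Function.update x j s') a) - ψ θ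
          + b (Function.update x j s') := funext fun s' => hlogq θ _
    rw [hfun]
    have hd1 : deriv (fun s' => (∑ a, θ a * t (Function.update x j s') a) - ψ θ
          + b (Function.update x j s'))
        = fun s0 => (∑ a, θ a * deriv (fun s' => t (Function.update x j s') a) s0)
          + deriv (fun s' => b (Function.update x j s')) s0 := by
      funext s0
      exact deriv_comb θ _ _ _ s0
        (fun a => ((ht' a x j).differentiable h12).differentiableAt)
        ((hb' x j).differentiable h12).differentiableAt
    rw [hd1]
    exact deriv_comb' θ (fun a => deriv (fun s' => t (Function.update x j s') a)) _ (x j)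
      (fun a => (differentiable_deriv_of_contDiff2 (ht' a x j)).differentiableAt)
      (differentiable_deriv_of_contDiff2 (hb' x j)).differentiableAt
  constructor
  · rw [hΓ, quad_form, hc]
    simp only [dotProduct, hg, hh]
    rw [show (∑ j, pderiv' (fun y => pderiv' (logq θ) j y) j x)
        = ∑ j, ((∑ a, θ a * pderiv' (fun y => pderiv' (fun z => t z a) j y) j x)
          + pderiv' (fun y => pderiv' b j y) j x) from
      Finset.sum_congr rfl fun j _ => key2 j]
    rw [show (∑ j, (pderiv' (logq θ) j x)^2)
        = ∑ j, ((∑ a, θ a * pderiv' (fun z => t z a) j x) + pderiv' b j x)^2 from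
      Finset.sum_congr rfl fun j _ => by rw [key1 j x]]
    exact algebra_lemma θ (fun j a => pderiv' (fun z => t z a) j x)
      (fun j a => pderiv' (fun y => pderiv' (fun z => t z a) j y) j x)
      (fun j => pderiv' b j x) (fun j => pderiv' (fun y => pderiv' b j y) j x)
  · subst hΓ
    rw [posSemidef_iff_dotProduct_mulVec]
    constructor
    · ext i k
      simp only [Matrix.conjTranspose_apply, Matrix.sum_apply, Matrix.vecMulVec_apply,
        star_trivial]
      exact Finset.sum_congr rfl fun j _ => mul_comm _ _
    · intro v
      have hv : star v = v := by
        funext i; simp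
      rw [hv, quad_form]
      positivity
end

section
/- For the penalized quadratic objective Ĵ^λ(θ) = (1/2)θᵀΓθ - gᵀθ + λ‖θ‖₁ with Γ positive semidefinite and λ > 0: if (θ̃, z̃) satisfies the stationarity condition Γθ̃ - g + λz̃ = 0 where z̃ᵢ = sign(θ̃ᵢ) whenever θ̃ᵢ ≠ 0 and |z̃ᵢ| < 1 (strictly) whenever θ̃ᵢ = 0, then every minimizer θ of Ĵ^λ satisfies θᵢ = 0 for all i with θ̃ᵢ = 0; if moreover the submatrix Γ_{TT} indexed by T = {i : θ̃ᵢ ≠ 0} is invertible, then θ̃ is the unique minimizer of Ĵ^λ. -/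
open Matrix
open scoped Classical

/-- Primal-dual witness uniqueness lemma: if `(θ̃, z̃)` satisfies stationarity with
strict dual feasibility off the support of `θ̃`, then every minimizer vanishes off
that support; if moreover `Γ_TT` is invertible, `θ̃` is the unique minimizer. -/
theorem stmt_17 {s : ℕ}
    (Γ : Matrix (Fin s) (Fin s) ℝ) (hΓ : Γ.PosSemidef)
    (g : Fin s → ℝ) (lam : ℝ) (hlam : 0 < lam)
    (J : (Fin s → ℝ) → ℝ)
    (hJ : ∀ θ, J θ = (1/2) * (θ ⬝ᵥ Γ.mulVec θ) - g ⬝ᵥ θ + lam * ∑ i, |θ i|)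
    (θt zt : Fin s → ℝ)
    (hstat : Γ.mulVec θt - g + lam • zt = 0)
    (hsign : ∀ i, θt i ≠ 0 → zt i = Real.sign (θt i))
    (hstrict : ∀ i, θt i = 0 → |zt i| < 1)
    (T : Finset (Fin s)) (hT : T = Finset.univ.filter (fun i => θt i ≠ 0))
    (ΓTT : Matrix {i // i ∈ T} {i // i ∈ T} ℝ)
    (hΓTT : ∀ i j, ΓTT i j = Γ i.1 j.1) :
    (∀ θ : Fin s → ℝ, (∀ θ', J θ ≤ J θ') → ∀ i, θt i = 0 → θ i = 0) ∧
    (IsUnit ΓTT.det →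
      (∀ θ', J θt ≤ J θ') ∧
      ∀ θ : Fin s → ℝ, (∀ θ', J θ ≤ J θ') → θ = θt) := by
  -- symmetry of Γ
  have hsym : ∀ i j, Γ i j = Γ j i := by
    intro i j
    have := congrFun (congrFun hΓ.1 i) j
    simpa [Matrix.conjTranspose_apply] using this.symm
  have hswap : ∀ x y : Fin s → ℝ, x ⬝ᵥ Γ.mulVec y = y ⬝ᵥ Γ.mulVec x := by
    intro x y
    simp only [dotProduct, Matrix.mulVec, dotProduct, Finset.mul_sum]
    rw [Finset.sum_comm]
    apply Finset.sum_congr rfl; intro i _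
    apply Finset.sum_congr rfl; intro j _
    rw [hsym j i]; ring
  -- |zt i| ≤ 1
  have habs : ∀ i, |zt i| ≤ 1 := by
    intro i
    by_cases h : θt i = 0
    · exact (hstrict i h).le
    · rw [hsign i h]
      rcases lt_trichotomy (θt i) 0 with h1 | h1 | h1
      · simp [Real.sign_of_neg h1]
      · exact absurd h1 h
      · simp [Real.sign_of_pos h1]
  have hztθt : ∀ i, zt i * θt i = |θt i| := by
    intro i
    by_cases h : θt i = 0
    · simp [h]
    · rw [hsign i h]
      rcases lt_trichotomy (θt i) 0 with h1 | h1 | h1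
      · rw [Real.sign_of_neg h1, abs_of_neg h1]; ring
      · exact absurd h1 h
      · rw [Real.sign_of_pos h1, abs_of_pos h1]; ring
  have hGg : ∀ i, (Γ.mulVec θt) i - g i = -(lam * zt i) := by
    intro i
    have := congrFun hstat i
    simp only [Pi.add_apply, Pi.sub_apply, Pi.smul_apply, smul_eq_mul, Pi.zero_apply] at this
    linarith
  -- key expansion
  have key : ∀ θ : Fin s → ℝ, J θ = J θt
      + (1/2) * ((θ - θt) ⬝ᵥ Γ.mulVec (θ - θt))
      + lam * ∑ i, (|θ i| - zt i * θ i) := by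
    intro θ
    have hθeq : θ = θt + (θ - θt) := by ring
    set d := θ - θt with hd
    have h1 : θ ⬝ᵥ Γ.mulVec θ
        = θt ⬝ᵥ Γ.mulVec θt + 2 * (d ⬝ᵥ Γ.mulVec θt) + d ⬝ᵥ Γ.mulVec d := by
      conv_lhs => rw [hθeq]
      rw [Matrix.mulVec_add, dotProduct_add, add_dotProduct, add_dotProduct,
        hswap θt d]
      ring
    have h2 : g ⬝ᵥ θ = g ⬝ᵥ θt + g ⬝ᵥ d := by
      conv_lhs => rw [hθeq]
      rw [dotProduct_add]
    have h3 : d ⬝ᵥ Γ.mulVec θt - g ⬝ᵥ d = -lam * ∑ i, zt i * d i := by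
      have : d ⬝ᵥ Γ.mulVec θt - g ⬝ᵥ d = ∑ i, d i * ((Γ.mulVec θt) i - g i) := by
        simp only [dotProduct]
        rw [← Finset.sum_sub_distrib]
        apply Finset.sum_congr rfl; intro i _; ring
      rw [this, Finset.mul_sum]
      apply Finset.sum_congr rfl; intro i _
      rw [hGg i]; ring
    have h4 : ∑ i, zt i * d i = (∑ i, zt i * θ i) - ∑ i, |θt i| := by
      rw [← Finset.sum_sub_distrib]
      apply Finset.sum_congr rfl; intro i _
      rw [← hztθt i]; simp only [hd, Pi.sub_apply]; ring
    rw [hJ θ, hJ θt, h1, h2]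
    have h5 : lam * ∑ i, (|θ i| - zt i * θ i)
        = lam * (∑ i, |θ i|) - lam * ∑ i, zt i * θ i := by
      rw [Finset.sum_sub_distrib]; ring
    have h6 : d ⬝ᵥ Γ.mulVec θt - g ⬝ᵥ d
        = -lam * ((∑ i, zt i * θ i) - ∑ i, |θt i|) := by rw [h3, h4]
    linarith [h6, h5]
  -- nonnegativity of the ℓ¹ gap terms
  have hterm : ∀ (θ : Fin s → ℝ) i, 0 ≤ |θ i| - zt i * θ i := by
    intro θ i
    have h1 : zt i * θ i ≤ |zt i * θ i| := le_abs_self _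
    have h2 : |zt i * θ i| = |zt i| * |θ i| := abs_mul _ _
    have h3 : |zt i| * |θ i| ≤ 1 * |θ i| :=
      mul_le_mul_of_nonneg_right (habs i) (abs_nonneg _)
    linarith
  have hquad : ∀ v : Fin s → ℝ, 0 ≤ v ⬝ᵥ Γ.mulVec v := by
    intro v
    have := hΓ.dotProduct_mulVec_nonneg v
    simpa using this
  have hsumnn : ∀ θ : Fin s → ℝ, 0 ≤ ∑ i, (|θ i| - zt i * θ i) :=
    fun θ => Finset.sum_nonneg (fun i _ => hterm θ i)
  have hmin : ∀ θ', J θt ≤ J θ' := by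
    intro θ'
    rw [key θ']
    have := hquad (θ' - θt)
    have := hsumnn θ'
    nlinarith [hlam]
  -- from being a minimizer, extract the two zero conditions
  have hzero : ∀ θ : Fin s → ℝ, (∀ θ', J θ ≤ J θ') →
      ((θ - θt) ⬝ᵥ Γ.mulVec (θ - θt) = 0 ∧ ∀ i, |θ i| - zt i * θ i = 0) := by
    intro θ hθ
    have heq : J θ = J θt := le_antisymm (hθ θt) (hmin θ)
    have hk := key θ
    rw [heq] at hk
    have hq := hquad (θ - θt)
    have hs := hsumnn θ
    have hsum0 : ∑ i, (|θ i| - zt i * θ i) = 0 := by nlinarith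
    constructor
    · nlinarith
    · intro i
      have := (Finset.sum_eq_zero_iff_of_nonneg (fun i _ => hterm θ i)).mp hsum0 i
        (Finset.mem_univ i)
      exact this
  have part1 : ∀ θ : Fin s → ℝ, (∀ θ', J θ ≤ J θ') → ∀ i, θt i = 0 → θ i = 0 := by
    intro θ hθ i hi
    have h0 := (hzero θ hθ).2 i
    have hlt := hstrict i hi
    by_contra hne
    have hpos : 0 < |θ i| := abs_pos.mpr hne
    have h1 : zt i * θ i ≤ |zt i| * |θ i| := by
      calc zt i * θ i ≤ |zt i * θ i| := le_abs_self _
        _ = |zt i| * |θ i| := abs_mul _ _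
    nlinarith
  refine ⟨part1, fun hdet => ⟨hmin, ?_⟩⟩
  intro θ hθ
  obtain ⟨hq0, _⟩ := hzero θ hθ
  have hAv : Γ.mulVec (θ - θt) = 0 := by
    have := (hΓ.dotProduct_mulVec_zero_iff (θ - θt)).mp (by simpa using hq0)
    exact this
  set d := θ - θt with hd
  have hdoff : ∀ i, i ∉ T → d i = 0 := by
    intro i hi
    have hθti : θt i = 0 := by
      by_contra h
      exact hi (hT ▸ Finset.mem_filter.mpr ⟨Finset.mem_univ i, h⟩)
    have : θ i = 0 := part1 θ hθ i hθti
    simp [hd, this, hθti]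
  have hw : ΓTT.mulVec (fun j => d j.1) = 0 := by
    funext i
    have h1 : (Γ.mulVec d) i.1 = 0 := congrFun hAv i.1
    have h2 : (Γ.mulVec d) i.1 = ∑ j, Γ i.1 j * d j := rfl
    have h3 : ∑ j, Γ i.1 j * d j = ∑ j ∈ T, Γ i.1 j * d j := by
      symm
      apply Finset.sum_subset (Finset.subset_univ T)
      intro j _ hj
      rw [hdoff j hj, mul_zero]
    have h4 : (ΓTT.mulVec (fun j => d j.1)) i = ∑ j ∈ T, Γ i.1 j * d j := by
      simp only [Matrix.mulVec, dotProduct]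
      rw [← Finset.sum_coe_sort T (fun j => Γ i.1 j * d j)]
      apply Finset.sum_congr rfl; intro j _
      rw [hΓTT i j]
    rw [h4, ← h3, ← h2, h1]
    rfl
  have hw0 : (fun j : {i // i ∈ T} => d j.1) = 0 := by
    have hinv := Matrix.nonsing_inv_mul ΓTT hdet
    calc (fun j : {i // i ∈ T} => d j.1)
        = (1 : Matrix {i // i ∈ T} {i // i ∈ T} ℝ).mulVec (fun j => d j.1) := by
          rw [Matrix.one_mulVec]
      _ = (ΓTT⁻¹ * ΓTT).mulVec (fun j => d j.1) := by rw [hinv]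
      _ = ΓTT⁻¹.mulVec (ΓTT.mulVec (fun j => d j.1)) := by rw [Matrix.mulVec_mulVec]
      _ = 0 := by rw [hw, Matrix.mulVec_zero]
  have hdall : d = 0 := by
    funext i
    by_cases hi : i ∈ T
    · exact congrFun hw0 ⟨i, hi⟩
    · exact hdoff i hi
  have : θ - θt = 0 := hdall
  funext i
  have := congrFun this i
  simp only [Pi.sub_apply, Pi.zero_apply] at this
  linarith
end

section
/- Let ρ ∈ (0, 1/√2) and let Σ be the 4×4 matrix with ones on the diagonal, Σ₂₃ = Σ₃₂ = 0, Σ₁₄ = Σ₄₁ = 2ρ², and all other off-diagonal entries equal to ρ. Then Σ is positive definite and its inverse K = Σ^{-1} satisfies K₁₄ = K₄₁ = 0. -/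
open Matrix

set_option maxHeartbeats 1000000 in
/-- Meinshausen's example: the 4×4 covariance matrix with the given pattern is
positive definite and its inverse has a zero `(1,4)` entry. -/
theorem stmt_18 (ρ : ℝ) (hρ : ρ ∈ Set.Ioo (0 : ℝ) (1 / Real.sqrt 2))
    (Sig : Matrix (Fin 4) (Fin 4) ℝ)
    (hSig : Sig = !![1, ρ, ρ, 2*ρ^2;
                 ρ, 1, 0, ρ;
                 ρ, 0, 1, ρ;
                 2*ρ^2, ρ, ρ, 1]) :
    Sig.PosDef ∧ Sig⁻¹ 0 3 = 0 ∧ Sig⁻¹ 3 0 = 0 := by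
  obtain ⟨hρ0, hρ1⟩ := hρ
  have hs2 : Real.sqrt 2 > 0 := Real.sqrt_pos.2 (by norm_num)
  have hsq : ρ ^ 2 < 1 / 2 := by
    have h1 : ρ * Real.sqrt 2 < 1 := (lt_div_iff₀ hs2).mp hρ1
    have h2 : Real.sqrt 2 ^ 2 = 2 := Real.sq_sqrt (by norm_num)
    nlinarith [sq_nonneg (ρ * Real.sqrt 2)]
  have hd : (0 : ℝ) < 1 - 2 * ρ ^ 2 := by linarith
  have hd' : (1 : ℝ) - 2 * ρ ^ 2 ≠ 0 := ne_of_gt hd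
  have h2d : (0 : ℝ) < 1 + 2 * ρ ^ 2 := by positivity
  -- the explicit inverse
  set K : Matrix (Fin 4) (Fin 4) ℝ :=
    (1 - 2 * ρ ^ 2)⁻¹ • !![1, -ρ, -ρ, 0;
                           -ρ, 1, 2*ρ^2, -ρ;
                           -ρ, 2*ρ^2, 1, -ρ;
                           0, -ρ, -ρ, 1] with hK
  have hSK : Sig * K = 1 := by
    have hd'' : (1:ℝ) - ρ^2*2 ≠ 0 := by rwa [mul_comm]
    subst hSig
    ext i j
    fin_cases i <;> fin_cases j <;>
      simp [hK, Matrix.mul_apply, Fin.sum_univ_four, Matrix.one_apply] <;>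
      field_simp <;> ring
  have hinv : Sig⁻¹ = K := inv_eq_right_inv hSK
  refine ⟨Matrix.PosDef.of_dotProduct_mulVec_pos ?_ ?_, ?_, ?_⟩
  · subst hSig
    ext i j
    fin_cases i <;> fin_cases j <;> simp [Matrix.conjTranspose_apply]
  · intro x hx
    have hx' : x 0 ≠ 0 ∨ x 1 ≠ 0 ∨ x 2 ≠ 0 ∨ x 3 ≠ 0 := by
      by_contra h
      push_neg at h
      apply hx
      funext i
      fin_cases i <;> simp [h.1, h.2.1, h.2.2.1, h.2.2.2]
    subst hSig
    have hform : star x ⬝ᵥ (!![1, ρ, ρ, 2*ρ^2;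
                 ρ, 1, 0, ρ;
                 ρ, 0, 1, ρ;
                 2*ρ^2, ρ, ρ, 1] *ᵥ x) =
        (ρ * (x 0 + x 3) + x 1) ^ 2 + (ρ * (x 0 + x 3) + x 2) ^ 2
        + (1 - 2 * ρ ^ 2) * (x 0) ^ 2 + (1 - 2 * ρ ^ 2) * (x 3) ^ 2 := by
      simp [dotProduct, Matrix.mulVec, Fin.sum_univ_four]
      ring
    rw [hform]
    rcases hx' with h | h | h | h
    · have h1 : 0 < (x 0)^2 := pow_pos (abs_pos.mpr h) 2 |>.trans_eq (by rw [sq_abs])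
      nlinarith [sq_nonneg (ρ * (x 0 + x 3) + x 1), sq_nonneg (ρ * (x 0 + x 3) + x 2),
        sq_nonneg (x 3), mul_pos hd h1]
    · have h1 : 0 < (x 1)^2 := pow_pos (abs_pos.mpr h) 2 |>.trans_eq (by rw [sq_abs])
      nlinarith [sq_nonneg ((1+2*ρ^2)*(ρ*(x 0 + x 3)+ x 1) + (1-2*ρ^2)*ρ*(x 0 + x 3)),
        mul_pos (mul_pos h2d hd) h1,
        mul_nonneg hd.le (sq_nonneg (x 0 + x 3)),
        mul_nonneg h2d.le (sq_nonneg (ρ*(x 0 + x 3)+ x 2)),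
        mul_nonneg (mul_nonneg h2d.le hd.le) (sq_nonneg (x 0 - x 3)), mul_pos h2d hd]
    · have h1 : 0 < (x 2)^2 := pow_pos (abs_pos.mpr h) 2 |>.trans_eq (by rw [sq_abs])
      nlinarith [sq_nonneg ((1+2*ρ^2)*(ρ*(x 0 + x 3)+ x 2) + (1-2*ρ^2)*ρ*(x 0 + x 3)),
        mul_pos (mul_pos h2d hd) h1,
        mul_nonneg hd.le (sq_nonneg (x 0 + x 3)),
        mul_nonneg h2d.le (sq_nonneg (ρ*(x 0 + x 3)+ x 1)),
        mul_nonneg (mul_nonneg h2d.le hd.le) (sq_nonneg (x 0 - x 3)), mul_pos h2d hd]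
    · have h1 : 0 < (x 3)^2 := pow_pos (abs_pos.mpr h) 2 |>.trans_eq (by rw [sq_abs])
      nlinarith [sq_nonneg (ρ * (x 0 + x 3) + x 1), sq_nonneg (ρ * (x 0 + x 3) + x 2),
        sq_nonneg (x 0), mul_pos hd h1]
  · rw [hinv, hK]
    simp
  · rw [hinv, hK]
    simp
end
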